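/- Let b > 1 with K_b < ∞ and let k ≥ 2. If 𝕒_1 <_lex 𝕒_2 <_lex ⋯ <_lex 𝕒_N are pairwise-consecutive elements of 𝒟_A^{k−1} (each 𝕒_i and 𝕒_{i+1} are consecutive admissible (k−1)-blocks) that all belong to E_{k−1,d}, then N ≤ K_b + 2. -/

import Mathlib

/-- The beta transformation `T x = b x - ⌊b x⌋`. -/
noncomputable def bT (b : ℝ) (x : ℝ) : ℝ := b * x - ⌊b * x⌋

/-- `bdig b j x` is the `(j+1)`-th digit `d_{j+1}(x) = ⌊b · T^[j] x⌋` of the `b`-expansion. -/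
noncomputable def bdig (b : ℝ) (j : ℕ) (x : ℝ) : ℤ := ⌊b * (bT b)^[j] x⌋

/-- A block `a_0 ⋯ a_{n-1}` (0-indexed) is admissible if it consists of the
first `n` digits of the `b`-expansion of some `x ∈ [0,1)`. -/
def bAdm (b : ℝ) (n : ℕ) (a : ℕ → ℤ) : Prop :=
  ∃ x ∈ Set.Ico (0 : ℝ) 1, ∀ j < n, a j = bdig b j x

/-- The value `𝕒(b) = Σ_{k=1}^n a_k b^{-k}` of a block. -/
noncomputable def blockVal (b : ℝ) (n : ℕ) (a : ℕ → ℤ) : ℝ :=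
  ∑ j ∈ Finset.range n, (a j : ℝ) * b ^ (-((j : ℤ) + 1))

/-- `a ∈ E_{k-1,d}`: `a` is an admissible `(k-1)`-block and for some `j < k`
(1-indexed), the value of the block `a_j ⋯ a_{k-1} (d+1)` exceeds 1.
Here `a` is 0-indexed, so the suffix starts at a 0-indexed position `j < k-1`. -/
def memE (b : ℝ) (k : ℕ) (d : ℤ) (a : ℕ → ℤ) : Prop :=
  bAdm b (k - 1) a ∧ ∃ j < k - 1,
    1 < (∑ m ∈ Finset.range (k - 1 - j), (a (j + m) : ℝ) * b ^ (-((m : ℤ) + 1)))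
        + (d + 1 : ℝ) * b ^ (-((k - 1 - j : ℕ) : ℤ) - 1)

/-- Lexicographic order on blocks of length `n`. -/
def lexLt (n : ℕ) (a c : ℕ → ℤ) : Prop :=
  ∃ m < n, (∀ j < m, a j = c j) ∧ a m < c m

/-- Two admissible `n`-blocks are consecutive (with `a <_lex c`) if no admissible
`n`-block lies strictly between them. -/
def bConsecutive (b : ℝ) (n : ℕ) (a c : ℕ → ℤ) : Prop :=
  bAdm b n a ∧ bAdm b n c ∧ lexLt n a c ∧
    ¬ ∃ e : ℕ → ℤ, bAdm b n e ∧ lexLt n a e ∧ lexLt n e c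

/-- The set of lengths `L` of zero blocks occurring among the first `i_b` digits of the
`b`-expansion of `b - ⌊b⌋` (a zero run of length `L` lies within the first `i_b` digits
iff some strictly later digit is nonzero).  `K_b < ∞` means this set has a greatest
element `K_b`. -/
def zeroRunSet (b : ℝ) : Set ℕ :=
  {L | ∃ p : ℕ, (∀ m < L, bdig b (p + m) (b - ⌊b⌋) = 0) ∧
        ∃ j, p + L ≤ j ∧ bdig b j (b - ⌊b⌋) ≠ 0}

namespace StmtAux

variable {b : ℝ}

lemma bT_mem (x : ℝ) : bT b x ∈ Set.Ico (0:ℝ) 1 := by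
  have h1 := Int.fract_nonneg (b * x)
  have h2 := Int.fract_lt_one (b * x)
  simp only [Int.fract] at h1 h2
  exact ⟨h1, h2⟩

lemma iter_mem {x : ℝ} (hx : x ∈ Set.Ico (0:ℝ) 1) (j : ℕ) :
    (bT b)^[j] x ∈ Set.Ico (0:ℝ) 1 := by
  induction j with
  | zero => exact hx
  | succ j _ => rw [Function.iterate_succ_apply']; exact bT_mem _

lemma bT_zero : bT b 0 = 0 := by simp [bT]

lemma iter_zero (j : ℕ) : (bT b)^[j] (0:ℝ) = 0 := by
  induction j with
  | zero => rfl
  | succ j ih => rw [Function.iterate_succ_apply', ih, bT_zero]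

lemma bdig_nonneg (hb : 1 < b) {x : ℝ} (hx : x ∈ Set.Ico (0:ℝ) 1) (j : ℕ) :
    0 ≤ bdig b j x := by
  have h := (iter_mem (b := b) hx j).1
  have hb0 : (0:ℝ) < b := lt_trans one_pos hb
  exact Int.floor_nonneg.2 (mul_nonneg hb0.le h)

lemma zp_inv (hb : 1 < b) (q : ℕ) : b ^ (-(q:ℤ)) = (b ^ q)⁻¹ := by
  have hbne : b ≠ 0 := ne_of_gt (lt_trans one_pos hb)
  rw [zpow_neg, zpow_natCast]

lemma zp_mul (hb : 1 < b) (q : ℕ) : b ^ q * b ^ (-(q:ℤ)) = 1 := by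
  have hbne : b ≠ 0 := ne_of_gt (lt_trans one_pos hb)
  rw [← zpow_natCast b q, ← zpow_add₀ hbne]; simp

lemma zp_pos (hb : 1 < b) (z : ℤ) : 0 < b ^ z :=
  zpow_pos (lt_trans one_pos hb) z

lemma blockVal_congr {n : ℕ} {a a' : ℕ → ℤ} (h : ∀ j < n, a j = a' j) :
    blockVal b n a = blockVal b n a' := by
  unfold blockVal
  exact Finset.sum_congr rfl (fun j hj => by rw [h j (Finset.mem_range.1 hj)])

lemma blockVal_succ {n : ℕ} (a : ℕ → ℤ) :
    blockVal b (n+1) a = blockVal b n a + (a n : ℝ) * b ^ (-(n:ℤ) - 1) := by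
  unfold blockVal
  rw [Finset.sum_range_succ]
  congr 2
  ring

lemma iter_eq (hb : 1 < b) {x : ℝ} {n : ℕ} {a : ℕ → ℤ}
    (hd : ∀ j < n, a j = bdig b j x) :
    ∀ q, q ≤ n → (bT b)^[q] x = b ^ q * (x - blockVal b q a) := by
  have hb0 : (0:ℝ) < b := lt_trans one_pos hb
  have hbne : b ≠ 0 := ne_of_gt hb0
  intro q
  induction q with
  | zero => intro _; simp [blockVal]
  | succ q ih =>
    intro hq
    have hq' : q ≤ n := Nat.le_of_succ_le hq
    have hiter := ih hq'
    have hfl : ⌊b * (bT b)^[q] x⌋ = a q := (hd q (Nat.lt_of_succ_le hq)).symm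
    rw [Function.iterate_succ_apply', bT, hfl, hiter, blockVal_succ]
    have h1 : b ^ (q+1) * ((a q : ℝ) * b ^ (-(q:ℤ) - 1)) = a q := by
      rw [show (-(q:ℤ) - 1) = -((q+1 : ℕ):ℤ) by push_cast; ring, zp_inv hb]
      field_simp
    linear_combination h1



lemma prefix_bounds (hb : 1 < b) {x : ℝ} {n : ℕ} {a : ℕ → ℤ}
    (hx : x ∈ Set.Ico (0:ℝ) 1) (hd : ∀ j < n, a j = bdig b j x) {q : ℕ} (hq : q ≤ n) :
    blockVal b q a ≤ x ∧ x < blockVal b q a + b ^ (-(q:ℤ)) := by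
  have h := iter_eq hb hd q hq
  have hm := iter_mem (b := b) hx q
  rw [h] at hm
  have hq0 : (0:ℝ) < b ^ (q:ℕ) := pow_pos (lt_trans one_pos hb) q
  constructor
  · nlinarith [hm.1]
  · have h2 := hm.2
    rw [zp_inv hb]
    have h3 := mul_lt_mul_of_pos_left h2 (inv_pos.2 hq0)
    rw [← mul_assoc, inv_mul_cancel₀ (ne_of_gt hq0), one_mul, mul_one] at h3
    linarith

lemma lex_mono (hb : 1 < b) {x y : ℝ} {n : ℕ} {a c : ℕ → ℤ}
    (hx : x ∈ Set.Ico (0:ℝ) 1) (hy : y ∈ Set.Ico (0:ℝ) 1)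
    (hxa : ∀ j < n, a j = bdig b j x) (hyc : ∀ j < n, c j = bdig b j y)
    (hlex : lexLt n a c) : x < y := by
  obtain ⟨m, hmn, heq, hlt⟩ := hlex
  have hxm := iter_eq hb hxa m (le_of_lt hmn)
  have hym := iter_eq hb hyc m (le_of_lt hmn)
  have hPeq : blockVal b m a = blockVal b m c := blockVal_congr (fun j hj => heq j hj)
  have hfx : ⌊b * (bT b)^[m] x⌋ = a m := (hxa m hmn).symm
  have hfy : ⌊b * (bT b)^[m] y⌋ = c m := (hyc m hmn).symm
  have hkey : b * (bT b)^[m] x < b * (bT b)^[m] y := by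
    by_contra hcon
    push_neg at hcon
    have := Int.floor_le_floor hcon
    rw [hfx, hfy] at this
    omega
  rw [hxm, hym, hPeq] at hkey
  have hq0 : (0:ℝ) < b ^ (m:ℕ) := pow_pos (lt_trans one_pos hb) m
  have hb0 : (0:ℝ) < b := lt_trans one_pos hb
  by_contra hcon
  push_neg at hcon
  nlinarith [hkey, mul_nonneg (mul_pos hb0 hq0).le (sub_nonneg.2 hcon)]

lemma lex_trichotomy (n : ℕ) (a c : ℕ → ℤ) :
    (∀ j < n, a j = c j) ∨ lexLt n a c ∨ lexLt n c a := by
  induction n with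
  | zero => left; omega
  | succ n ih =>
    rcases ih with h | h | h
    · rcases lt_trichotomy (a n) (c n) with h2 | h2 | h2
      · right; left; exact ⟨n, Nat.lt_succ_self n, h, h2⟩
      · left; intro j hj
        rcases Nat.lt_succ_iff_lt_or_eq.1 hj with hj | hj
        · exact h j hj
        · rw [hj, h2]
      · right; right; exact ⟨n, Nat.lt_succ_self n, fun j hj => (h j hj).symm, h2⟩
    · right; left; obtain ⟨m, hm, h1, h2⟩ := h; exact ⟨m, Nat.lt_succ_of_lt hm, h1, h2⟩
    · right; right; obtain ⟨m, hm, h1, h2⟩ := h; exact ⟨m, Nat.lt_succ_of_lt hm, h1, h2⟩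

lemma blockVal_split (hb : 1 < b) (a : ℕ → ℤ) {j n : ℕ} (hj : j ≤ n) :
    blockVal b n a = blockVal b j a
      + b ^ (-(j:ℤ)) * ∑ m ∈ Finset.range (n - j), (a (j + m) : ℝ) * b ^ (-((m : ℤ) + 1)) := by
  have hbne : b ≠ 0 := ne_of_gt (lt_trans one_pos hb)
  unfold blockVal
  conv_lhs => rw [Finset.range_eq_Ico]
  rw [← Finset.sum_Ico_consecutive _ (Nat.zero_le j) hj, ← Finset.range_eq_Ico]
  congr 1
  rw [Finset.sum_Ico_eq_sum_range, Finset.mul_sum]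
  apply Finset.sum_congr rfl
  intro m _
  rw [← mul_assoc, mul_comm (b ^ (-(j:ℤ))) ((a (j+m) : ℝ)), mul_assoc, ← zpow_add₀ hbne]
  congr 2
  push_cast
  ring

lemma blockVal_nonneg (hb : 1 < b) {n : ℕ} {a : ℕ → ℤ} (h : ∀ j < n, 0 ≤ a j) :
    0 ≤ blockVal b n a := by
  apply Finset.sum_nonneg
  intro j hj
  have := h j (Finset.mem_range.1 hj)
  have : (0:ℝ) ≤ (a j : ℝ) := by exact_mod_cast this
  positivity


def Cyl (b : ℝ) (n : ℕ) (a : ℕ → ℤ) (x : ℝ) : Prop :=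
  x ∈ Set.Ico (0:ℝ) 1 ∧ ∀ j < n, a j = bdig b j x

lemma junction (hb : 1 < b) {n : ℕ} {a a' : ℕ → ℤ} (h : bConsecutive b n a a') :
    ∃ m < n, (∀ j < m, a j = a' j) ∧ a' m = a m + 1 ∧
      (∀ r, m < r → r < n → a' r = 0) ∧
      (∀ η > 0, ∃ x, Cyl b n a x ∧
        blockVal b m a + ((a m : ℝ) + 1) * b ^ (-(m:ℤ) - 1) - η < x) ∧
      (∀ x, Cyl b n a x → x < blockVal b m a + ((a m : ℝ) + 1) * b ^ (-(m:ℤ) - 1)) := by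
  obtain ⟨hA, hA', hlex, hnb⟩ := h
  obtain ⟨m, hmn, heq, hlt⟩ := hlex
  obtain ⟨xw, hxw, hdx⟩ := hA
  obtain ⟨xw', hxw', hdx'⟩ := hA'
  have hb0 : (0:ℝ) < b := lt_trans one_pos hb
  have hbne : b ≠ 0 := ne_of_gt hb0
  set S := blockVal b m a + ((a m : ℝ) + 1) * b ^ (-(m:ℤ) - 1) with hSdef
  have hexp : (-(m:ℤ) - 1) = -((m+1:ℕ):ℤ) := by push_cast; ring
  have hSalt : S = blockVal b (m+1) a + b ^ (-((m+1:ℕ):ℤ)) := by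
    rw [hSdef, blockVal_succ, hexp]; ring
  have hm1n : m + 1 ≤ n := Nat.succ_le_of_lt hmn
  have upperA : ∀ x, Cyl b n a x → x < S := by
    intro x hxc
    have hpb := (prefix_bounds hb hxc.1 hxc.2 hm1n).2
    rw [hSalt]
    exact hpb
  have ha'nn : ∀ j < n, 0 ≤ a' j := fun j hj => by
    rw [hdx' j hj]; exact bdig_nonneg hb hxw' j
  have hPm : blockVal b m a' = blockVal b m a :=
    blockVal_congr (fun j hj => (heq j hj).symm)
  have hSleP1 : S ≤ blockVal b (m+1) a' := by
    rw [blockVal_succ, hPm, hSdef]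
    have : (a m : ℝ) + 1 ≤ (a' m : ℝ) := by exact_mod_cast Int.add_one_le_iff.2 hlt
    have ht : (0:ℝ) < b ^ (-(m:ℤ) - 1) := zp_pos hb _
    nlinarith
  have htail : 0 ≤ ∑ mm ∈ Finset.range (n - (m+1)), (a' (m+1+mm) : ℝ) * b ^ (-((mm:ℤ)) - 1) := by
    apply Finset.sum_nonneg
    intro mm hmm
    have h1 : 0 ≤ a' (m+1+mm) := ha'nn _ (by have := Finset.mem_range.1 hmm; omega)
    have h1' : (0:ℝ) ≤ (a' (m+1+mm) : ℝ) := by exact_mod_cast h1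
    positivity
  have hsplit := blockVal_split hb a' hm1n
  have htail' : 0 ≤ ∑ mm ∈ Finset.range (n - (m+1)), (a' (m+1+mm) : ℝ) * b ^ (-((mm:ℤ)+1)) := by
    convert htail using 3 with mm
    congr 1
    ring
  have hP1leL' : blockVal b (m+1) a' ≤ blockVal b n a' := by
    rw [hsplit]
    have := zp_pos hb (-((m+1:ℕ):ℤ))
    nlinarith
  have SleL' : S ≤ blockVal b n a' := le_trans hSleP1 hP1leL'
  have lowerA' : ∀ x, Cyl b n a' x → blockVal b n a' ≤ x := fun x hxc =>
    (prefix_bounds hb hxc.1 hxc.2 (le_refl n)).1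
  have hxwxw' : xw < xw' := lex_mono hb hxw hxw' hdx hdx' ⟨m, hmn, heq, hlt⟩
  have between : ∀ y, xw < y → y < xw' → y ∈ Set.Ico (0:ℝ) 1 →
      Cyl b n a y ∨ Cyl b n a' y := by
    intro y hy1 hy2 hy
    rcases lex_trichotomy n (fun j => bdig b j y) a with h1 | h1 | h1
    · left; exact ⟨hy, fun j hj => (h1 j hj).symm⟩
    · exact absurd (lex_mono hb hy hxw (fun j _ => rfl) hdx h1) (by linarith)
    · rcases lex_trichotomy n (fun j => bdig b j y) a' with h2 | h2 | h2
      · right; exact ⟨hy, fun j hj => (h2 j hj).symm⟩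
      · exact absurd ⟨fun j => bdig b j y, ⟨y, hy, fun j _ => rfl⟩, h1, h2⟩ hnb
      · exact absurd (lex_mono hb hxw' hy hdx' (fun j _ => rfl) h2) (by linarith)
  have hxwS : xw < S := upperA xw ⟨hxw, hdx⟩
  have hSxw' : S ≤ xw' := le_trans SleL' (lowerA' xw' ⟨hxw', hdx'⟩)
  have approx : ∀ η > 0, ∃ x, Cyl b n a x ∧ S - η < x := by
    intro η hη
    by_contra hcon
    push_neg at hcon
    set y := (max xw (S - η) + S) / 2 with hydef
    have hmax : max xw (S - η) < S := max_lt hxwS (by linarith)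
    have hy1 : max xw (S - η) < y := by rw [hydef]; linarith
    have hy2 : y < S := by rw [hydef]; linarith
    have hyIco : y ∈ Set.Ico (0:ℝ) 1 := by
      constructor
      · have : xw ≤ max xw (S - η) := le_max_left _ _
        linarith [hxw.1]
      · have : y < xw' := lt_of_lt_of_le hy2 hSxw'
        linarith [hxw'.2]
    have hywlt : xw < y := lt_of_le_of_lt (le_max_left _ _) hy1
    have hyw' : y < xw' := lt_of_lt_of_le hy2 hSxw'
    rcases between y hywlt hyw' hyIco with hcy | hcy
    · have := hcon y hcy
      have : S - η ≤ max xw (S - η) := le_max_right _ _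
      linarith [hcon y hcy, hy1, le_max_right xw (S - η)]
    · have := le_trans SleL' (lowerA' y hcy)
      linarith
  have valA'le : blockVal b n a' ≤ S := by
    by_contra hcon
    push_neg at hcon
    set L' := blockVal b n a' with hL'def
    set y := (max xw S + min L' xw') / 2 with hydef
    have hxw'L : L' ≤ xw' := lowerA' xw' ⟨hxw', hdx'⟩
    have hmaxmin : max xw S < min L' xw' := by
      apply max_lt
      · exact lt_min (lt_trans hxwS hcon) hxwxw'
      · exact lt_min hcon (lt_of_lt_of_le hcon hxw'L)
    have hy1 : max xw S < y := by rw [hydef]; linarith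
    have hy2 : y < min L' xw' := by rw [hydef]; linarith
    have hywlt : xw < y := lt_of_le_of_lt (le_max_left _ _) hy1
    have hyw' : y < xw' := lt_of_lt_of_le hy2 (min_le_right _ _)
    have hyIco : y ∈ Set.Ico (0:ℝ) 1 := ⟨by linarith [hxw.1], by linarith [hxw'.2]⟩
    rcases between y hywlt hyw' hyIco with hcy | hcy
    · have := upperA y hcy
      have := le_max_right xw S
      linarith
    · have := lowerA' y hcy
      have := min_le_left L' xw'
      linarith
  have hval : blockVal b n a' = S := le_antisymm valA'le SleL'
  -- digit at m and zeros
  have hP1eq : blockVal b (m+1) a' = S := by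
    have h1 : blockVal b (m+1) a' ≤ blockVal b n a' := hP1leL'
    rw [hval] at h1
    exact le_antisymm h1 hSleP1
  have hsuccm : a' m = a m + 1 := by
    have h1 : blockVal b m a + ((a' m : ℝ)) * b ^ (-(m:ℤ) - 1)
        = blockVal b m a + ((a m : ℝ) + 1) * b ^ (-(m:ℤ) - 1) := by
      rw [← hPm, ← blockVal_succ, hP1eq, hSdef, hPm]
    have ht : (0:ℝ) < b ^ (-(m:ℤ) - 1) := zp_pos hb _
    have h2 : (a' m : ℝ) = (a m : ℝ) + 1 := by
      have := mul_right_cancel₀ (ne_of_gt ht) (by linarith : (a' m : ℝ) * b ^ (-(m:ℤ) - 1) = ((a m : ℝ) + 1) * b ^ (-(m:ℤ) - 1))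
      exact this
    exact_mod_cast h2
  have hzero : ∀ r, m < r → r < n → a' r = 0 := by
    have hsum0 : ∑ mm ∈ Finset.range (n - (m+1)), (a' (m+1+mm) : ℝ) * b ^ (-((mm:ℤ)+1)) = 0 := by
      have h1 : blockVal b n a' = blockVal b (m+1) a'
          + b ^ (-((m+1:ℕ):ℤ)) * ∑ mm ∈ Finset.range (n - (m+1)), (a' (m+1+mm) : ℝ) * b ^ (-((mm:ℤ)+1)) := hsplit
      rw [hval, hP1eq] at h1
      have h2 := zp_pos hb (-((m+1:ℕ):ℤ))
      nlinarith [htail']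
    have := (Finset.sum_eq_zero_iff_of_nonneg ?_).1 hsum0
    · intro r hmr hrn
      have hr : r - (m+1) ∈ Finset.range (n - (m+1)) := Finset.mem_range.2 (by omega)
      have := this _ hr
      have hre : m + 1 + (r - (m+1)) = r := by omega
      rw [hre] at this
      rcases mul_eq_zero.1 this with h | h
      · exact_mod_cast h
      · exact absurd h (ne_of_gt (zp_pos hb _))
    · intro mm hmm
      have h1 : 0 ≤ a' (m+1+mm) := ha'nn _ (by have := Finset.mem_range.1 hmm; omega)
      have h1' : (0:ℝ) ≤ (a' (m+1+mm) : ℝ) := by exact_mod_cast h1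
      positivity
  exact ⟨m, hmn, heq, hsuccm, hzero, approx, upperA⟩


lemma ev_pos : ∀ᶠ ε in nhdsWithin (0:ℝ) (Set.Ioi 0), 0 < ε := by
  filter_upwards [self_mem_nhdsWithin] with ε hε
  exact hε

lemma ev_lt {δ : ℝ} (hδ : 0 < δ) : ∀ᶠ ε in nhdsWithin (0:ℝ) (Set.Ioi 0), ε < δ := by
  have h : ∀ᶠ ε in nhds (0:ℝ), ε < δ := by
    have := isOpen_Iio.eventually_mem (show (0:ℝ) ∈ Set.Iio δ from hδ)
    filter_upwards [this] with x hx
    exact hx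
  exact h.filter_mono nhdsWithin_le_nhds

variable {c : ℕ → ℤ}

lemma c_nonneg (hb : 1 < b)
    (hc : ∀ j, ∀ᶠ ε in nhdsWithin (0:ℝ) (Set.Ioi 0), bdig b j (1 - ε) = c j) :
    ∀ j, 0 ≤ c j := by
  intro j
  obtain ⟨ε, h1, h2, h3⟩ := ((hc j).and ((ev_lt one_pos).and ev_pos)).exists
  rw [← h1]
  exact bdig_nonneg hb ⟨by linarith, by linarith⟩ j

lemma c0_ge1 (hb : 1 < b)
    (hc : ∀ j, ∀ᶠ ε in nhdsWithin (0:ℝ) (Set.Ioi 0), bdig b j (1 - ε) = c j) :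
    1 ≤ c 0 := by
  have hb0 : (0:ℝ) < b := lt_trans one_pos hb
  have hδ : (0:ℝ) < 1 - b⁻¹ := by
    have : b⁻¹ < 1 := inv_lt_one_of_one_lt₀ hb
    linarith
  obtain ⟨ε, h1, h2, h3⟩ := ((hc 0).and ((ev_lt hδ).and ev_pos)).exists
  rw [← h1]
  unfold bdig
  rw [Function.iterate_zero_apply]
  apply Int.le_floor.2
  have hinv : b * b⁻¹ = 1 := mul_inv_cancel₀ (ne_of_gt hb0)
  have : b⁻¹ < 1 - ε := by linarith
  push_cast
  nlinarith

lemma c_digits_ev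
    (hc : ∀ j, ∀ᶠ ε in nhdsWithin (0:ℝ) (Set.Ioi 0), bdig b j (1 - ε) = c j) (n : ℕ) :
    ∀ᶠ ε in nhdsWithin (0:ℝ) (Set.Ioi 0), ∀ j < n, bdig b j (1 - ε) = c j := by
  induction n with
  | zero => filter_upwards with ε j hj; omega
  | succ n ih =>
    filter_upwards [ih, hc n] with ε h1 h2 j hj
    rcases Nat.lt_succ_iff_lt_or_eq.1 hj with hj | hj
    · exact h1 j hj
    · rw [hj]; exact h2

lemma Cn_bounds (hb : 1 < b)
    (hc : ∀ j, ∀ᶠ ε in nhdsWithin (0:ℝ) (Set.Ioi 0), bdig b j (1 - ε) = c j) (n : ℕ) :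
    blockVal b n c < 1 ∧ 1 - b ^ (-(n:ℤ)) ≤ blockVal b n c := by
  constructor
  · obtain ⟨ε, h1, h2, h3⟩ := ((c_digits_ev hc n).and ((ev_lt one_pos).and ev_pos)).exists
    have hx : (1 - ε) ∈ Set.Ico (0:ℝ) 1 := ⟨by linarith, by linarith⟩
    have hd : ∀ j < n, c j = bdig b j (1 - ε) := fun j hj => (h1 j hj).symm
    have := (prefix_bounds hb hx hd (le_refl n)).1
    linarith
  · by_contra hcon
    push_neg at hcon
    set θ := 1 - b ^ (-(n:ℤ)) - blockVal b n c with hθ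
    have hθpos : 0 < θ := by rw [hθ]; linarith
    obtain ⟨ε, h1, h2, h3⟩ := ((c_digits_ev hc n).and ((ev_lt hθpos).and ev_pos)).exists
    have hx : (1 - ε) ∈ Set.Ico (0:ℝ) 1 := by
      constructor
      · have : θ ≤ 1 := by
          have := zp_pos hb (-(n:ℤ))
          have := blockVal_nonneg hb (n := n) (a := c) (fun j _ => c_nonneg hb hc j)
          rw [hθ]; linarith
        linarith
      · linarith
    have hd : ∀ j < n, c j = bdig b j (1 - ε) := fun j hj => (h1 j hj).symm
    have := (prefix_bounds hb hx hd (le_refl n)).2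
    rw [hθ] at h2
    linarith

lemma tail_eq_c (hb : 1 < b)
    (hc : ∀ j, ∀ᶠ ε in nhdsWithin (0:ℝ) (Set.Ioi 0), bdig b j (1 - ε) = c j)
    {n m : ℕ} {a : ℕ → ℤ} (hmn : m < n)
    (approx : ∀ η > 0, ∃ x, Cyl b n a x ∧
      blockVal b m a + ((a m : ℝ) + 1) * b ^ (-(m:ℤ) - 1) - η < x) :
    ∀ r, m + 1 + r < n → a (m+1+r) = c r := by
  have hb0 : (0:ℝ) < b := lt_trans one_pos hb
  intro r hr
  obtain ⟨ε0, hε0, hsub⟩ := Metric.mem_nhdsWithin_iff.1 (hc r)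
  have hη : (0:ℝ) < ε0 * b ^ (-((m+1:ℕ):ℤ)) := by
    have := zp_pos hb (-((m+1:ℕ):ℤ)); positivity
  obtain ⟨x, hxc, hxgt⟩ := approx _ hη
  have hm1n : m + 1 ≤ n := Nat.succ_le_of_lt hmn
  have hiter := iter_eq hb hxc.2 (m+1) hm1n
  have hexp : (-(m:ℤ) - 1) = -((m+1:ℕ):ℤ) := by push_cast; ring
  have hgt' : blockVal b (m+1) a + b ^ (-((m+1:ℕ):ℤ)) - ε0 * b ^ (-((m+1:ℕ):ℤ)) < x := by
    rw [blockVal_succ]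
    rw [hexp] at hxgt ⊢
    nlinarith [hxgt]
  set ε := 1 - (bT b)^[m+1] x with hεdef
  have hεpos : 0 < ε := by
    have := (iter_mem (b := b) hxc.1 (m+1)).2
    rw [hεdef]; linarith
  have hεlt : ε < ε0 := by
    rw [hεdef, hiter]
    have hmul := zp_mul hb (m+1)
    nlinarith [hgt', pow_pos hb0 (m+1), zp_pos hb (-((m+1:ℕ):ℤ))]
  have h1ε : (1:ℝ) - ε = (bT b)^[m+1] x := by rw [hεdef]; ring
  have hdig : bdig b r (1 - ε) = c r := by
    apply hsub
    constructor
    · simp only [Metric.mem_ball, Real.dist_eq, sub_zero]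
      rw [abs_of_pos hεpos]
      exact hεlt
    · exact hεpos
  calc a (m+1+r) = bdig b (m+1+r) x := hxc.2 _ hr
    _ = bdig b r (1 - ε) := by
        unfold bdig
        rw [show m+1+r = r+(m+1) by omega, Function.iterate_add_apply, h1ε]
    _ = c r := hdig


lemma dp1_le_b (hb : 1 < b)
    (hc : ∀ j, ∀ᶠ ε in nhdsWithin (0:ℝ) (Set.Ioi 0), bdig b j (1 - ε) = c j)
    {d' : ℤ} (hd' : IsLeast {z : ℤ | ∃ j, c j = z} d')
    {d : ℤ} (hd0 : 0 ≤ d) (hdd' : d ≤ d') : (d:ℝ) + 1 ≤ b := by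
  have hb0 : (0:ℝ) < b := lt_trans one_pos hb
  rcases le_or_gt d' 0 with hle | hgt
  · have hd : d = 0 := le_antisymm (le_trans hdd' hle) hd0
    rw [hd]; push_cast; linarith
  · have hlow : ∀ j, d' ≤ c j := fun j => hd'.2 ⟨j, rfl⟩
    have hrlt : b⁻¹ < 1 := inv_lt_one_of_one_lt₀ hb
    have hrpos : (0:ℝ) ≤ b⁻¹ := by positivity
    have hrne : b⁻¹ ≠ 1 := ne_of_lt hrlt
    have key : ∀ n : ℕ, (d':ℝ) * (1 - (b⁻¹)^n) ≤ (b - 1) := by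
      intro n
      have h1 : (d':ℝ) * ∑ j ∈ Finset.range n, b ^ (-(j:ℤ) - 1) ≤ blockVal b n c := by
        unfold blockVal
        rw [Finset.mul_sum]
        apply Finset.sum_le_sum
        intro j _
        have h2 : (d':ℝ) ≤ (c j : ℝ) := by exact_mod_cast hlow j
        have h3 : (0:ℝ) < b ^ (-((j:ℤ)) - 1) := zp_pos hb _
        rw [show (-((j:ℤ)+1)) = -(j:ℤ) - 1 by ring]
        nlinarith
      have h4 : ∀ q : ℕ, ∑ j ∈ Finset.range q, b ^ (-(j:ℤ) - 1) = (1 - (b⁻¹)^q) / (b - 1) := by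
        have h5 : ∀ j : ℕ, b ^ (-(j:ℤ) - 1) = b⁻¹ * (b⁻¹)^j := by
          intro j
          rw [show (-(j:ℤ) - 1) = -(((j+1:ℕ)):ℤ) by push_cast; ring, zp_inv hb]
          rw [pow_succ, mul_inv, ← inv_pow]
          ring
        have hb1 : b - 1 ≠ 0 := by intro h; rw [sub_eq_zero] at h; rw [← h] at hb; linarith
        have hbne : b ≠ 0 := ne_of_gt hb0
        intro q
        induction q with
        | zero => simp
        | succ q ih =>
          rw [Finset.sum_range_succ, ih, h5]
          field_simp
          have hx : b * b⁻¹ = 1 := mul_inv_cancel₀ hbne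
          rw [one_div, pow_succ]
          linear_combination (b⁻¹ ^ q) * hx
      have h4 := h4 n
      have h6 := (Cn_bounds hb hc n).1
      rw [h4] at h1
      have h7 : (d':ℝ) * ((1 - (b⁻¹)^n) / (b - 1)) < 1 := lt_of_le_of_lt h1 h6
      rw [div_eq_inv_mul, ← mul_assoc] at h7
      have h8 : (0:ℝ) < b - 1 := by linarith
      calc (d':ℝ) * (1 - (b⁻¹)^n) = ((d':ℝ) * (b-1)⁻¹ * (1 - (b⁻¹)^n)) * (b-1) := by
            field_simp
        _ ≤ 1 * (b-1) := mul_le_mul_of_nonneg_right (le_of_lt h7) (le_of_lt h8)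
        _ = b - 1 := one_mul _
    have hlim : Filter.Tendsto (fun n : ℕ => (d':ℝ) * (1 - (b⁻¹)^n)) Filter.atTop
        (nhds ((d':ℝ) * (1 - 0))) := by
      apply Filter.Tendsto.const_mul
      exact (tendsto_const_nhds.sub (tendsto_pow_atTop_nhds_zero_of_lt_one hrpos hrlt))
    have hfin : (d':ℝ) * (1 - 0) ≤ b - 1 :=
      le_of_tendsto hlim (Filter.Eventually.of_forall key)
    have : (d:ℝ) ≤ (d':ℝ) := by exact_mod_cast hdd'
    nlinarith

lemma star (hb : 1 < b) {d : ℤ}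
    {n m W : ℕ} {a : ℕ → ℤ} (hW : m + 1 + W = n)
    (hmE : ∃ j < n, 1 < (∑ mm ∈ Finset.range (n - j), (a (j + mm) : ℝ) * b ^ (-((mm : ℤ) + 1)))
        + (d + 1 : ℝ) * b ^ (-((n - j : ℕ) : ℤ) - 1))
    (approx : ∀ η > 0, ∃ x, Cyl b n a x ∧
      blockVal b m a + ((a m : ℝ) + 1) * b ^ (-(m:ℤ) - 1) - η < x)
    (tail : ∀ r, m + 1 + r < n → a (m+1+r) = c r) :
    1 - blockVal b W c < (d + 1 : ℝ) * b ^ (-(W:ℤ) - 1) := by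
  have hb0 : (0:ℝ) < b := lt_trans one_pos hb
  have hbne : b ≠ 0 := ne_of_gt hb0
  have hm1n : m + 1 ≤ n := by omega
  obtain ⟨j, hjn, hineq⟩ := hmE
  have hexp : (-(m:ℤ) - 1) = -((m+1:ℕ):ℤ) := by push_cast; ring
  -- upper bound on S
  have hSle : blockVal b (m+1) a + b ^ (-((m+1:ℕ):ℤ)) ≤ blockVal b j a + b ^ (-(j:ℤ)) := by
    apply le_of_forall_pos_le_add
    intro η hη
    obtain ⟨x, hxc, hxgt⟩ := approx η hη
    have hub := (prefix_bounds hb hxc.1 hxc.2 (le_of_lt hjn)).2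
    have hxgt' : blockVal b m a + (a m : ℝ) * b ^ (-(m:ℤ)-1) + b ^ (-(m:ℤ)-1) - η < x := by
      nlinarith [hxgt]
    rw [blockVal_succ, ← hexp]
    linarith
  -- lower bound on L
  have hz : b ^ (-(j:ℤ)) * b ^ (-((n-j:ℕ):ℤ) - 1) = b ^ (-(n:ℤ) - 1) := by
    rw [← zpow_add₀ hbne]
    congr 1
    have : ((n-j:ℕ):ℤ) = (n:ℤ) - (j:ℤ) := by
      push_cast [Nat.cast_sub (le_of_lt hjn)]; ring
    rw [this]; ring
  have hLgt : blockVal b j a + b ^ (-(j:ℤ)) - (d+1:ℝ) * b ^ (-(n:ℤ)-1) < blockVal b n a := by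
    rw [blockVal_split hb a (le_of_lt hjn)]
    have hV : 1 - (d + 1 : ℝ) * b ^ (-((n - j : ℕ) : ℤ) - 1)
        < ∑ mm ∈ Finset.range (n - j), (a (j + mm) : ℝ) * b ^ (-((mm : ℤ) + 1)) := by
      linarith
    have hp1 : (0:ℝ) < b ^ (-(j:ℤ)) := zp_pos hb _
    have hmul := mul_lt_mul_of_pos_left hV hp1
    have hz' : (d+1:ℝ) * (b ^ (-(j:ℤ)) * b ^ (-((n-j:ℕ):ℤ) - 1)) = (d+1:ℝ) * b ^ (-(n:ℤ) - 1) := by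
      rw [hz]
    nlinarith [hmul, hz']
  -- L in terms of C_W
  have hLW : blockVal b n a = blockVal b (m+1) a + b ^ (-((m+1:ℕ):ℤ)) * blockVal b W c := by
    rw [blockVal_split hb a hm1n]
    congr 1
    congr 1
    rw [show n - (m+1) = W by omega]
    unfold blockVal
    apply Finset.sum_congr rfl
    intro mm hmm
    rw [tail mm (by have := Finset.mem_range.1 hmm; omega)]
  have hz2 : b ^ (-(n:ℤ)-1) = b ^ (-((m+1:ℕ):ℤ)) * b ^ (-(W:ℤ)-1) := by
    rw [← zpow_add₀ hbne]
    congr 1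
    have : (n:ℤ) = ((m:ℤ)+1) + (W:ℤ) := by exact_mod_cast hW.symm
    rw [this]; push_cast; ring
  have hp2 : (0:ℝ) < b ^ (-((m+1:ℕ):ℤ)) := zp_pos hb _
  have hfinal : b ^ (-((m+1:ℕ):ℤ)) * (1 - blockVal b W c)
      < b ^ (-((m+1:ℕ):ℤ)) * ((d+1:ℝ) * b ^ (-(W:ℤ)-1)) := by
    rw [hLW] at hLgt
    rw [hz2] at hLgt
    nlinarith [hLgt, hSle]
  exact lt_of_mul_lt_mul_left hfinal (le_of_lt hp2)


lemma iter_propagate {x : ℝ} {m i : ℕ} (hmi : m ≤ i) (h : (bT b)^[m] x = 0) :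
    (bT b)^[i] x = 0 := by
  have he : i = (i - m) + m := by omega
  rw [he, Function.iterate_add_apply, h, iter_zero]

lemma iter_pos (hb : 1 < b) {x : ℝ} (hx : x ∈ Set.Ico (0:ℝ) 1) {j0 : ℕ}
    (hj0 : bdig b j0 x ≠ 0) : ∀ r ≤ j0, 0 < (bT b)^[r] x := by
  intro r hr
  rcases lt_or_eq_of_le (iter_mem (b := b) hx r).1 with h | h
  · exact h
  · exfalso
    apply hj0
    have := iter_propagate hr h.symm
    unfold bdig
    rw [this]
    simp

lemma zero_of_digits (hb : 1 < b) {x : ℝ} (hx : x ∈ Set.Ico (0:ℝ) 1)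
    (h : ∀ j, bdig b j x = 0) : x = 0 := by
  by_contra hne
  have hxpos : 0 < x := lt_of_le_of_ne hx.1 (Ne.symm hne)
  have hxlt : ∀ n : ℕ, x < (b^n)⁻¹ := by
    intro n
    have hd : ∀ j < n, (fun _ => (0:ℤ)) j = bdig b j x := fun j _ => (h j).symm
    have hpb := (prefix_bounds hb hx hd (le_refl n)).2
    rw [zp_inv hb] at hpb
    have hbv : blockVal b n (fun _ => (0:ℤ)) = 0 := by unfold blockVal; simp
    rw [hbv] at hpb
    linarith
  obtain ⟨n, hn⟩ := exists_pow_lt_of_lt_one hxpos (inv_lt_one_of_one_lt₀ hb)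
  rw [inv_pow] at hn
  exact absurd (hxlt n) (not_lt.2 (le_of_lt hn))

lemma floor_sub_small {u θ : ℝ} (hθ0 : 0 ≤ θ) (hθ : θ ≤ u - ⌊u⌋) : ⌊u - θ⌋ = ⌊u⌋ := by
  apply Int.floor_eq_iff.2
  constructor
  · linarith
  · have := Int.lt_floor_add_one u
    push_cast
    linarith

lemma iter_shift (hb : 1 < b) {x : ℝ} {q : ℕ} {η : ℝ} (hη0 : 0 ≤ η)
    (hpos : ∀ r, r ≤ q → b ^ r * η ≤ (bT b)^[r] x) :
    ∀ r, r ≤ q → (bT b)^[r] (x - η) = (bT b)^[r] x - b ^ r * η := by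
  have hb0 : (0:ℝ) < b := lt_trans one_pos hb
  intro r
  induction r with
  | zero => intro _; simp
  | succ r ih =>
    intro hr
    have h1 := ih (by omega)
    rw [Function.iterate_succ_apply', h1, bT]
    have hT1 : (bT b)^[r+1] x = b * (bT b)^[r] x - ⌊b * (bT b)^[r] x⌋ := by
      rw [Function.iterate_succ_apply']; rfl
    have hge := hpos (r+1) hr
    rw [hT1] at hge
    have halg : b * ((bT b)^[r] x - b ^ r * η) = b * (bT b)^[r] x - b ^ (r+1) * η := by ring
    have hfl : ⌊b * ((bT b)^[r] x - b ^ r * η)⌋ = ⌊b * (bT b)^[r] x⌋ := by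
      rw [halg]
      apply floor_sub_small (by positivity)
      linarith
    rw [hfl, halg, hT1]
    ring

lemma dig_shift (hb : 1 < b) {x : ℝ} {q : ℕ} {η : ℝ} (hη0 : 0 ≤ η)
    (hpos : ∀ r, r ≤ q → b ^ r * η ≤ (bT b)^[r] x) {r : ℕ} (hr : r + 1 ≤ q) :
    bdig b r (x - η) = bdig b r x := by
  unfold bdig
  rw [iter_shift hb hη0 hpos r (by omega)]
  have hT1 : (bT b)^[r+1] x = b * (bT b)^[r] x - ⌊b * (bT b)^[r] x⌋ := by
    rw [Function.iterate_succ_apply']; rfl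
  have hge := hpos (r+1) hr
  rw [hT1] at hge
  have halg : b * ((bT b)^[r] x - b ^ r * η) = b * (bT b)^[r] x - b ^ (r+1) * η := by ring
  rw [halg]
  apply floor_sub_small (by positivity)
  linarith

lemma ev_all_le {q : ℕ} {f : ℕ → ℝ} (hf : ∀ i ≤ q, 0 < f i) :
    ∀ᶠ η in nhdsWithin (0:ℝ) (Set.Ioi 0), ∀ i ≤ q, η ≤ f i := by
  induction q with
  | zero =>
    filter_upwards [ev_lt (hf 0 le_rfl)] with η hη i hi
    have : i = 0 := by omega
    rw [this]; linarith
  | succ q ih =>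
    filter_upwards [ih (fun i hi => hf i (by omega)), ev_lt (hf (q+1) le_rfl)] with η h1 h2 i hi
    rcases Nat.lt_succ_iff_lt_or_eq.1 (Nat.lt_succ_of_le hi) with h | h
    · exact h1 i (by omega)
    · rw [h]; linarith

lemma tendsto_scale {k : ℝ} (hk : 0 < k) :
    Filter.Tendsto (fun ε : ℝ => k * ε) (nhdsWithin (0:ℝ) (Set.Ioi 0))
      (nhdsWithin (0:ℝ) (Set.Ioi 0)) := by
  apply tendsto_nhdsWithin_of_tendsto_nhds_of_eventually_within
  · have h1 : Filter.Tendsto (fun ε : ℝ => k * ε) (nhds 0) (nhds (k * 0)) :=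
      (continuous_const.mul continuous_id).tendsto 0
    rw [mul_zero] at h1
    exact h1.mono_left nhdsWithin_le_nhds
  · filter_upwards [self_mem_nhdsWithin] with ε hε
    exact mul_pos hk hε

lemma ev_T_one_sub (hb : 1 < b) (hfrac : (0:ℝ) < b - (⌊b⌋ : ℤ)) :
    ∀ᶠ ε in nhdsWithin (0:ℝ) (Set.Ioi 0), bT b (1 - ε) = (b - (⌊b⌋:ℤ)) - b * ε := by
  have hb0 : (0:ℝ) < b := lt_trans one_pos hb
  filter_upwards [ev_pos, ev_lt (show (0:ℝ) < (b - (⌊b⌋:ℤ))/b by positivity)] with ε hε0 hεlt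
  unfold bT
  have hbε : b * ε < b - (⌊b⌋:ℤ) := by
    have := mul_lt_mul_of_pos_left hεlt hb0
    rwa [mul_div_cancel₀ _ (ne_of_gt hb0)] at this
  have hfl : ⌊b * (1 - ε)⌋ = ⌊b⌋ := by
    apply Int.floor_eq_iff.2
    constructor
    · nlinarith
    · have h2 := Int.lt_floor_add_one b
      push_cast
      nlinarith
  rw [hfl]
  ring

lemma bridge (hb : 1 < b)
    (hc : ∀ j, ∀ᶠ ε in nhdsWithin (0:ℝ) (Set.Ioi 0), bdig b j (1 - ε) = c j) (r : ℕ)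
    (hnz : ∃ j, r < j ∧ bdig b j (b - (⌊b⌋:ℤ)) ≠ 0) :
    c (r+1) = bdig b r (b - (⌊b⌋:ℤ)) := by
  have hb0 : (0:ℝ) < b := lt_trans one_pos hb
  set x0 : ℝ := b - (⌊b⌋:ℤ) with hx0
  obtain ⟨j0, hrj0, hj0⟩ := hnz
  have hx0mem : x0 ∈ Set.Ico (0:ℝ) 1 := by
    constructor
    · rw [hx0]; have := Int.floor_le b; linarith
    · rw [hx0]; have := Int.lt_floor_add_one b; push_cast at this ⊢; linarith
  have hpos : ∀ i ≤ j0, 0 < (bT b)^[i] x0 := iter_pos hb hx0mem hj0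
  have hx0pos : 0 < x0 := by have := hpos 0 (Nat.zero_le _); simpa using this
  have hf : ∀ i ≤ r+1, (0:ℝ) < (bT b)^[i] x0 / b ^ i := fun i hi =>
    div_pos (hpos i (by omega)) (pow_pos hb0 i)
  have hevcond : ∀ᶠ η in nhdsWithin (0:ℝ) (Set.Ioi 0),
      ∀ i ≤ r+1, b ^ i * η ≤ (bT b)^[i] x0 := by
    filter_upwards [ev_all_le hf] with η hη i hi
    have h1 := hη i hi
    have h2 : (0:ℝ) < b ^ i := pow_pos hb0 i
    rw [le_div_iff₀ h2] at h1
    linarith [h1]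
  have hscale := (tendsto_scale hb0).eventually hevcond
  have hev2 : ∀ᶠ ε in nhdsWithin (0:ℝ) (Set.Ioi 0),
      bdig b (r+1) (1 - ε) = bdig b r x0 := by
    filter_upwards [ev_T_one_sub hb hx0pos, hscale, ev_pos] with ε hT hcond hε0
    have step1 : bdig b (r+1) (1 - ε) = bdig b r (bT b (1 - ε)) := by
      unfold bdig
      rw [Function.iterate_succ_apply]
    rw [step1, hT]
    exact dig_shift hb (by positivity) hcond (le_refl (r+1))
  obtain ⟨ε, h1, h2⟩ := ((hc (r+1)).and hev2).exists
  rw [← h1, h2]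

lemma period (hb : 1 < b)
    (hc : ∀ j, ∀ᶠ ε in nhdsWithin (0:ℝ) (Set.Ioi 0), bdig b j (1 - ε) = c j) {M : ℕ}
    (hM : bdig b M (b - (⌊b⌋:ℤ)) ≠ 0)
    (hMmax : ∀ j, M < j → bdig b j (b - (⌊b⌋:ℤ)) = 0) :
    ∀ t, c (M+2+t) = c t := by
  intro t
  have hb0 : (0:ℝ) < b := lt_trans one_pos hb
  set x0 : ℝ := b - (⌊b⌋:ℤ) with hx0
  have hx0mem : x0 ∈ Set.Ico (0:ℝ) 1 := by
    constructor
    · rw [hx0]; have := Int.floor_le b; linarith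
    · rw [hx0]; have := Int.lt_floor_add_one b; push_cast at this ⊢; linarith
  have hpos : ∀ i ≤ M, 0 < (bT b)^[i] x0 := iter_pos hb hx0mem hM
  have hx0pos : 0 < x0 := by have := hpos 0 (Nat.zero_le _); simpa using this
  have hTM1 : (bT b)^[M+1] x0 = 0 := by
    apply zero_of_digits hb (iter_mem hx0mem (M+1))
    intro s
    have h1 : bdig b s ((bT b)^[M+1] x0) = bdig b (M+1+s) x0 := by
      unfold bdig
      rw [show M+1+s = s+(M+1) by omega, Function.iterate_add_apply (bT b) s (M+1) x0]
    rw [h1]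
    exact hMmax _ (by omega)
  have hbTMx : b * (bT b)^[M] x0 = (bdig b M x0 : ℝ) := by
    have h1 : (bT b)^[M+1] x0 = b * (bT b)^[M] x0 - ⌊b * (bT b)^[M] x0⌋ := by
      rw [Function.iterate_succ_apply']; rfl
    rw [hTM1] at h1
    unfold bdig
    linarith
  have hf : ∀ i ≤ M, (0:ℝ) < (bT b)^[i] x0 / b ^ i := fun i hi =>
    div_pos (hpos i hi) (pow_pos hb0 i)
  have hevcond : ∀ᶠ η in nhdsWithin (0:ℝ) (Set.Ioi 0),
      ∀ i ≤ M, b ^ i * η ≤ (bT b)^[i] x0 := by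
    filter_upwards [ev_all_le hf] with η hη i hi
    have h1 := hη i hi
    have h2 : (0:ℝ) < b ^ i := pow_pos hb0 i
    rw [le_div_iff₀ h2] at h1
    linarith [h1]
  have hev1 : ∀ᶠ η in nhdsWithin (0:ℝ) (Set.Ioi 0),
      (bT b)^[M+1] (x0 - η) = 1 - b ^ (M+1) * η := by
    filter_upwards [hevcond, ev_pos, ev_lt (show (0:ℝ) < (b^(M+1))⁻¹ by positivity)]
      with η hcond hη0 hηlt
    rw [Function.iterate_succ_apply', iter_shift hb (le_of_lt hη0) hcond M le_rfl, bT]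
    have halg : b * ((bT b)^[M] x0 - b ^ M * η) = (bdig b M x0 : ℝ) - b ^ (M+1) * η := by
      rw [mul_sub, hbTMx]; ring
    rw [halg]
    have hθ1 : b ^ (M+1) * η < 1 := by
      have h2 : (0:ℝ) < b ^ (M+1) := pow_pos hb0 (M+1)
      have := mul_lt_mul_of_pos_left hηlt h2
      rwa [mul_inv_cancel₀ (ne_of_gt h2)] at this
    have hθ0 : 0 < b ^ (M+1) * η := by positivity
    have hfl : ⌊(bdig b M x0 : ℝ) - b ^ (M+1) * η⌋ = bdig b M x0 - 1 := by
      apply Int.floor_eq_iff.2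
      constructor
      · push_cast; linarith
      · push_cast; linarith
    rw [hfl]
    push_cast
    ring
  have hscale := (tendsto_scale hb0).eventually hev1
  have hscale2 := (tendsto_scale hb0).eventually hevcond
  have hc' := (tendsto_scale (show (0:ℝ) < b^(M+1) * b by positivity)).eventually (hc t)
  have hev2 : ∀ᶠ ε in nhdsWithin (0:ℝ) (Set.Ioi 0),
      bdig b (M+2+t) (1 - ε) = c t := by
    filter_upwards [ev_T_one_sub hb hx0pos, hscale, hc', ev_pos] with ε hT hTM hct hε0
    have step1 : bdig b (M+2+t) (1 - ε) = bdig b (M+1+t) (bT b (1 - ε)) := by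
      unfold bdig
      rw [show M+2+t = (M+1+t)+1 by omega, Function.iterate_succ_apply]
    have step2 : bdig b (M+1+t) (x0 - b * ε) = bdig b t ((bT b)^[M+1] (x0 - b * ε)) := by
      unfold bdig
      rw [show M+1+t = t+(M+1) by omega,
        Function.iterate_add_apply (bT b) t (M+1) (x0 - b * ε)]
    rw [step1, hT, step2, hTM]
    rw [show 1 - b ^ (M+1) * (b * ε) = 1 - (b ^ (M+1) * b) * ε by ring]
    exact hct
  obtain ⟨ε, h1, h2⟩ := ((hc (M+2+t)).and hev2).exists
  rw [← h1, h2]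


lemma run_le (hb : 1 < b)
    (hc : ∀ j, ∀ᶠ ε in nhdsWithin (0:ℝ) (Set.Ioi 0), bdig b j (1 - ε) = c j)
    {K : ℕ} (hK : IsGreatest (zeroRunSet b) K)
    {s ℓ : ℕ} (hs : 1 ≤ s)
    (hz : ∀ t, t < ℓ → c (s + t) = 0) : ℓ ≤ K + 1 := by
  rcases Nat.eq_zero_or_pos ℓ with hℓ0 | hℓpos
  · omega
  have hc0 := c0_ge1 hb hc
  obtain ⟨p0, hp0run, j0, hj0le, hj0⟩ := hK.1
  by_cases hcase : ∀ j, s + ℓ - 1 ≤ j → bdig b j (b - (⌊b⌋:ℤ)) = 0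
  · -- terminating case
    have hj0lt : j0 < s + ℓ - 1 := by
      by_contra hcon
      exact hj0 (hcase j0 (by omega))
    classical
    set P : ℕ → Prop := fun j => bdig b j (b - (⌊b⌋:ℤ)) ≠ 0 with hP
    set M := Nat.findGreatest P (s + ℓ) with hMdef
    have hMP : P M := Nat.findGreatest_spec (m := j0) (by omega) hj0
    have hMmax : ∀ j, M < j → bdig b j (b - (⌊b⌋:ℤ)) = 0 := by
      intro j hj
      by_cases hjn : j ≤ s + ℓ
      · by_contra hne
        exact (Nat.findGreatest_is_greatest hj hjn) hne
      · exact hcase j (by omega)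
    have hMlt : M + 2 ≤ s + ℓ := by
      by_contra hcon
      push_neg at hcon
      exact hMP (hcase M (by omega))
    have hper : ∀ u k, c (u + k * (M + 2)) = c u := by
      intro u k
      induction k with
      | zero => simp
      | succ k ih =>
        rw [show u + (k+1) * (M+2) = (M+2) + (u + k*(M+2)) by ring]
        rw [period hb hc hMP hMmax (u + k*(M+2))]
        exact ih
    set Q := M + 2 with hQ
    have hQpos : 0 < Q := by omega
    have hmod : ∀ u : ℕ, c u = c (u % Q) := by
      intro u
      conv_lhs => rw [← Nat.mod_add_div' u Q]
      exact hper (u % Q) (u / Q)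
    have hnz0 : ∀ t, t < ℓ → (s + t) % Q ≠ 0 := by
      intro t ht h0
      have h1 := hz t ht
      rw [hmod (s+t), h0] at h1
      omega
    have hsQ : s % Q < Q := Nat.mod_lt s hQpos
    have hs' : 1 ≤ s % Q := by
      have h1 := hnz0 0 hℓpos
      rw [Nat.add_zero] at h1
      omega
    have hwrap : s % Q + ℓ ≤ Q := by
      by_contra hcon
      push_neg at hcon
      set t0 := Q - s % Q with ht0
      have ht0ℓ : t0 < ℓ := by omega
      apply hnz0 t0 ht0ℓ
      have h2 := Nat.div_add_mod s Q
      obtain ⟨D, hD⟩ : ∃ D, Q * (s / Q) = D := ⟨_, rfl⟩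
      rw [hD] at h2
      have h3 : s + t0 = D + Q := by omega
      rw [h3, ← hD, Nat.mul_add_mod, Nat.mod_self]
    have hmodadd : ∀ t, t < ℓ → (s + t) % Q = s % Q + t := by
      intro t ht
      have h2 : (s + t) % Q = (s % Q + t) % Q := by
        conv_lhs => rw [← Nat.div_add_mod s Q]
        rw [add_assoc, Nat.mul_add_mod]
      rw [h2]
      exact Nat.mod_eq_of_lt (by omega)
    have hzrun : ∀ t, t < ℓ → c (s % Q + t) = 0 := by
      intro t ht
      rw [← hmodadd t ht, ← hmod (s + t)]
      exact hz t ht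
    have hbridged : ∀ t, t < ℓ → s % Q + t ≤ M → bdig b (s % Q - 1 + t) (b - (⌊b⌋:ℤ)) = 0 := by
      intro t ht hle
      have hb1 : c ((s % Q - 1 + t) + 1) = bdig b (s % Q - 1 + t) (b - (⌊b⌋:ℤ)) :=
        bridge hb hc _ ⟨M, by omega, hMP⟩
      rw [show (s % Q - 1 + t) + 1 = s % Q + t by omega] at hb1
      rw [← hb1]
      exact hzrun t ht
    rcases le_or_gt (s % Q + ℓ) (M + 1) with hcase2 | hcase2
    · have hmem : ℓ ∈ zeroRunSet b := by
        refine ⟨s % Q - 1, fun m hm => hbridged m hm (by omega), M, by omega, hMP⟩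
      have := hK.2 hmem
      omega
    · have hseq : s % Q + ℓ = M + 2 := by omega
      have hmem : ℓ - 1 ∈ zeroRunSet b := by
        refine ⟨s % Q - 1, fun m hm => hbridged m (by omega) (by omega), M, by omega, hMP⟩
      have := hK.2 hmem
      omega
  · push_neg at hcase
    obtain ⟨j, hjge, hjne⟩ := hcase
    have hrun : ∀ m, m < ℓ → bdig b (s - 1 + m) (b - (⌊b⌋:ℤ)) = 0 := by
      intro m hm
      have hb1 : c ((s - 1 + m) + 1) = bdig b (s - 1 + m) (b - (⌊b⌋:ℤ)) :=
        bridge hb hc _ ⟨j, by omega, hjne⟩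
      rw [show (s - 1 + m) + 1 = s + m by omega] at hb1
      rw [← hb1]
      exact hz m hm
    have hmem : ℓ ∈ zeroRunSet b := ⟨s - 1, hrun, j, by omega, hjne⟩
    have := hK.2 hmem
    omega

end StmtAux

/-- If `𝕒_1 <_lex ⋯ <_lex 𝕒_N` are pairwise-consecutive admissible `(k-1)`-blocks all
belonging to `E_{k-1,d}`, then `N ≤ K_b + 2`. -/
theorem stmt4 (b : ℝ) (hb : 1 < b) (K : ℕ) (hK : IsGreatest (zeroRunSet b) K)
    (k : ℕ) (hk : 2 ≤ k)
    (c : ℕ → ℤ)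
    (hc : ∀ j, ∀ᶠ ε in nhdsWithin (0 : ℝ) (Set.Ioi 0), bdig b j (1 - ε) = c j)
    (d' : ℤ) (hd' : IsLeast {z : ℤ | ∃ j, c j = z} d')
    (d : ℤ) (hd0 : 0 ≤ d) (hdd' : d ≤ d')
    (N : ℕ) (A : ℕ → ℕ → ℤ)
    (hchain : ∀ i, i + 1 < N → bConsecutive b (k - 1) (A i) (A (i + 1)))
    (hE : ∀ i < N, memE b k d (A i)) :
    N ≤ K + 2 := by
  classical
  rcases le_or_gt N 2 with hN2 | hN3
  · omega
  -- N ≥ 3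
  have hn1 : 1 ≤ k - 1 := by omega
  -- junction data for each consecutive pair
  have J : ∀ i, i + 1 < N → ∃ m < k - 1, (∀ j < m, A i j = A (i+1) j) ∧
      A (i+1) m = A i m + 1 ∧ (∀ r, m < r → r < k - 1 → A (i+1) r = 0) ∧
      (∀ η > 0, ∃ x, StmtAux.Cyl b (k-1) (A i) x ∧
        blockVal b m (A i) + ((A i m : ℝ) + 1) * b ^ (-(m:ℤ) - 1) - η < x) ∧
      (∀ x, StmtAux.Cyl b (k-1) (A i) x →
        x < blockVal b m (A i) + ((A i m : ℝ) + 1) * b ^ (-(m:ℤ) - 1)) :=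
    fun i h => StmtAux.junction hb (hchain i h)
  choose m hmlt heq hsucc hzero happrox hupper using J
  have tail : ∀ i, ∀ (h : i + 1 < N), ∀ r, m i h + 1 + r < k - 1 →
      A i (m i h + 1 + r) = c r :=
    fun i h => StmtAux.tail_eq_c hb hc (hmlt i h) (happrox i h)
  have starI : ∀ i, ∀ (h : i + 1 < N),
      1 - blockVal b (k - 1 - 1 - m i h) c
        < ((d:ℝ) + 1) * b ^ (-((k - 1 - 1 - m i h : ℕ) : ℤ) - 1) := by
    intro i h
    have hWeq : m i h + 1 + (k - 1 - 1 - m i h) = k - 1 := by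
      have := hmlt i h
      have := hupper i h
      omega
    exact StmtAux.star hb hWeq (hE i (by omega)).2 (happrox i h) (tail i h)
  have hd1b : (d:ℝ) + 1 ≤ b := StmtAux.dp1_le_b hb hc hd' hd0 hdd'
  have hb0 : (0:ℝ) < b := lt_trans one_pos hb
  have hbne : b ≠ 0 := ne_of_gt hb0
  have hWpos : ∀ i, ∀ (h : i + 1 < N), m i h + 2 ≤ k - 1 := by
    intro i h
    by_contra hcon
    have hW0 : k - 1 - 1 - m i h = 0 := by have := hmlt i h; omega
    have hstar := starI i h
    rw [hW0] at hstar
    have hbv0 : blockVal b 0 c = 0 := by unfold blockVal; simp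
    rw [hbv0] at hstar
    have hexp : (-((0:ℕ):ℤ) - 1) = (-1 : ℤ) := by simp
    rw [hexp] at hstar
    have hle1 : ((d:ℝ) + 1) * b ^ (-1:ℤ) ≤ 1 := by
      rw [zpow_neg_one]
      have h1 : ((d:ℝ) + 1) * b⁻¹ ≤ b * b⁻¹ :=
        mul_le_mul_of_nonneg_right hd1b (by positivity)
      rwa [mul_inv_cancel₀ hbne] at h1
    linarith
  have hdec : ∀ i, ∀ (h : i + 2 < N), m (i+1) h < m i (by omega) := by
    intro i h
    by_contra hcon
    push_neg at hcon
    have hr : m (i+1) h + 1 + 0 < k - 1 := by have := hWpos (i+1) h; omega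
    have h1 := tail (i+1) h 0 hr
    have h2 := hzero i (by omega) (m (i+1) h + 1 + 0) (by omega) (by omega)
    have hc0 := StmtAux.c0_ge1 hb hc
    rw [h1] at h2
    omega
  have hacc : ∀ i, ∀ (h : i + 1 < N), m i h + i + 2 ≤ k - 1 := by
    intro i
    induction i with
    | zero => intro h; have := hWpos 0 h; omega
    | succ i ih =>
      intro h
      have h'' : i + 1 < N := by omega
      have h1 := ih h''
      have h2 := hdec i (by omega)
      have h3 : m i h'' = m i (by omega : i + 1 < N) := rfl
      omega
  -- the last two junctions
  set t := N - 3 with htdef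
  have ht : t + 1 < N := by omega
  have ht2 : t + 2 < N := by omega
  set mt := m t ht with hmtdef
  set mu := m (t+1) ht2 with hmudef
  have hmumt : mu < mt := hdec t ht2
  have hmt2 : mt + 2 ≤ k - 1 := hWpos t ht
  have hmu2 : mu + 2 ≤ k - 1 := hWpos (t+1) ht2
  have hacct : mt + t + 2 ≤ k - 1 := hacc t ht
  have haccu : mu + (t + 1) + 2 ≤ k - 1 := hacc (t+1) ht2
  -- zeros of c from the middle block A (t+1)
  have hczero : ∀ sIdx, mt - mu ≤ sIdx → sIdx + mu + 2 ≤ k - 1 → c sIdx = 0 := by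
    intro sIdx h1 h2
    have hr : mu + 1 + sIdx < k - 1 := by omega
    have e1 := tail (t+1) ht2 sIdx hr
    have e2 := hzero t ht (mu + 1 + sIdx) (by omega) (by omega)
    rw [e1] at e2
    exact e2
  -- d = 0
  have hs0 : c (mt - mu) = 0 := hczero (mt - mu) le_rfl (by omega)
  have hd'le : d' ≤ 0 := by
    have := hd'.2 ⟨mt - mu, rfl⟩
    omega
  have hdzero : d = 0 := by omega
  -- c at position Wu is zero
  set Wu := k - 1 - 1 - mu with hWudef
  have hWuge : N - 1 ≤ Wu := by omega
  set Wt := k - 1 - 1 - mt with hWtdef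
  have hWtge : N - 2 ≤ Wt := by omega
  have hcWu : c Wu = 0 := by
    have hstar := starI (t+1) ht2
    rw [← hWudef] at hstar
    rw [hdzero] at hstar
    have hCW1 := (StmtAux.Cn_bounds hb hc (Wu+1)).1
    have hsc : blockVal b (Wu+1) c = blockVal b Wu c + (c Wu : ℝ) * b ^ (-(Wu:ℤ)-1) :=
      StmtAux.blockVal_succ c
    have hθ : (0:ℝ) < b ^ (-(Wu:ℤ) - 1) := StmtAux.zp_pos hb _
    have hcast : ((0:ℤ):ℝ) + 1 = 1 := by norm_num
    rw [hcast] at hstar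
    have hlt1 : (c Wu : ℝ) * b ^ (-(Wu:ℤ)-1) < 1 * b ^ (-(Wu:ℤ)-1) := by
      have hexp2 : (-((Wu:ℕ):ℤ) - 1) = (-(Wu:ℤ) - 1) := by norm_num
      rw [hexp2, one_mul] at hstar
      linarith
    have hlt2 : (c Wu : ℝ) < 1 := lt_of_mul_lt_mul_right hlt1 (le_of_lt hθ)
    have hnn := StmtAux.c_nonneg hb hc Wu
    have : c Wu < 1 := by exact_mod_cast hlt2
    omega
  -- assemble the zero run of length N - 1
  set sstart := Wu - (N - 2) with hsdef
  have hsge1 : 1 ≤ sstart := by omega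
  have hrun : ∀ t', t' < N - 1 → c (sstart + t') = 0 := by
    intro t' ht'
    rcases lt_or_eq_of_le (show sstart + t' ≤ Wu by omega) with hlt | heqq
    · apply hczero
      · omega
      · omega
    · rw [heqq]; exact hcWu
  have hfin := StmtAux.run_le hb hc hK hsge1 hrun
  omega
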